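/- Let n ≥ 1, θ₀ > 0 and w₀ ∈ (0,1), and set π̂ = θ₀ w₀. Let u_1, …, u_n be i.i.d. random variables uniform on (0,1) and w = max_{1≤i≤n} u_i. Then the law of the SwiZs estimator θ̂ := π̂ / w = θ₀ w₀ / w is the Pareto distribution with scale π̂ and shape n: it is absolutely continuous with density θ ↦ n π̂^n / θ^{n+1} on (π̂, ∞) (and density 0 elsewhere) with respect to Lebesgue measure. -/

import Mathlib

open MeasureTheory ProbabilityTheory Set
open scoped ENNReal

/-!
STATEMENT 17 (Example `ch2:ex:unif`, SwiZs posterior for the uniform upper bound).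

Uniform model with unknown upper bound: with auxiliary estimator `π̂ = θ₀ w₀`
(`θ₀ > 0`, `w₀ ∈ (0,1)` the observed maximal pivot), and `u 1, …, u n` i.i.d. uniform
on `(0,1)` with `w = max_i u i`, the law of the SwiZs estimator `θ̂ = π̂ / w` is the
Pareto distribution with scale `π̂` and shape `n`: it has density
`θ ↦ n π̂ⁿ / θ^(n+1)` on `(π̂, ∞)` (and `0` elsewhere) with respect to Lebesgue measure.
-/

theorem swizs_uniform_upper_bound_pareto
    {Ω : Type*} [MeasurableSpace Ω] (P : Measure Ω) [IsProbabilityMeasure P]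
    (n : ℕ) (hn : 1 ≤ n)
    (θ₀ w₀ : ℝ) (hθ₀ : 0 < θ₀) (hw₀ : w₀ ∈ Set.Ioo (0 : ℝ) 1)
    (u : Fin n → Ω → ℝ) (hmeas : ∀ i, Measurable (u i))
    (hindep : iIndepFun u P)
    (hunif : ∀ i, P.map (u i) = volume.restrict (Set.Ioo (0 : ℝ) 1)) :
    P.map (fun ω => (θ₀ * w₀) / ⨆ i, u i ω) =
      volume.withDensity (fun θ => ENNReal.ofReal
        (if θ₀ * w₀ < θ then n * (θ₀ * w₀) ^ n / θ ^ (n + 1) else 0)) := by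
  obtain ⟨hw₀0, hw₀1⟩ := hw₀
  set c : ℝ := θ₀ * w₀ with hc_def
  have hc : 0 < c := mul_pos hθ₀ hw₀0
  have hnR : (0:ℝ) < n := by exact_mod_cast hn
  haveI : Nonempty (Fin n) := ⟨⟨0, hn⟩⟩
  set W : Ω → ℝ := fun ω => ⨆ i, u i ω with hW_def
  have hWmeas : Measurable W := Measurable.iSup fun i => hmeas i
  have hfmeas : Measurable fun ω => c / W ω := measurable_const.div hWmeas
  set d : ℝ → ℝ≥0∞ :=
    fun θ => ENNReal.ofReal (if c < θ then n * c ^ n / θ ^ (n + 1) else 0) with hd_def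
  -- density agrees a.e. with paretoPDF
  have hne : ∀ᵐ θ : ℝ ∂volume, θ ≠ c := by
    rw [ae_iff]
    simp
  have hd_ae : d =ᵐ[volume] paretoPDF c n := by
    filter_upwards [hne] with θ hθ
    by_cases hlt : c < θ
    · have hθ0 : 0 < θ := hc.trans hlt
      rw [paretoPDF_of_le hlt.le]
      simp only [hd_def, hlt, ite_true]
      congr 1
      rw [Real.rpow_natCast]
      have : θ ^ (-((n:ℝ) + 1)) = (θ ^ (n + 1) : ℝ)⁻¹ := by
        rw [Real.rpow_neg hθ0.le]
        norm_cast
      rw [this, div_eq_mul_inv]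
    · have : θ < c := lt_of_le_of_ne (not_lt.mp hlt) hθ
      rw [paretoPDF_of_lt this]
      simp [hd_def, hlt]
  have hRHS_eq : volume.withDensity d = paretoMeasure c n := by
    rw [paretoMeasure]
    exact withDensity_congr_ae hd_ae
  haveI : IsProbabilityMeasure (volume.withDensity d) := by
    rw [hRHS_eq]; exact isProbabilityMeasure_paretoMeasure hc hnR
  haveI : IsProbabilityMeasure (P.map fun ω => c / W ω) :=
    Measure.isProbabilityMeasure_map hfmeas.aemeasurable
  -- a.e. all pivots in (0,1)
  have hae : ∀ᵐ ω ∂P, ∀ i, u i ω ∈ Ioo (0:ℝ) 1 := by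
    rw [ae_all_iff]
    intro i
    have h0 : P.map (u i) (Ioo (0:ℝ) 1)ᶜ = 0 := by
      rw [hunif i, Measure.restrict_apply measurableSet_Ioo.compl]
      simp
    rw [Measure.map_apply (hmeas i) measurableSet_Ioo.compl] at h0
    rw [ae_iff]
    exact h0
  have hbdd : ∀ ω, BddAbove (range fun i => u i ω) := fun ω =>
    (Set.finite_range _).bddAbove
  have hWsup : ∀ ω, ∃ j, W ω = u j ω := by
    intro ω
    obtain ⟨j, hj⟩ := Finite.exists_max fun i => u i ω
    exact ⟨j, le_antisymm (ciSup_le hj) (le_ciSup (hbdd ω) j)⟩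
  have hWle : ∀ ω, (∀ i, u i ω ∈ Ioo (0:ℝ) 1) → 0 < W ω ∧ W ω < 1 := by
    intro ω hω
    obtain ⟨j, hj⟩ := hWsup ω
    rw [hj]
    exact ⟨(hω j).1, (hω j).2⟩
  -- distribution of the max
  have hprod : ∀ s : ℝ, 0 < s → s ≤ 1 →
      P (⋂ i, u i ⁻¹' Iio s) = ENNReal.ofReal s ^ n := by
    intro s hs0 hs1
    rw [hindep.meas_iInter fun i => ⟨Iio s, measurableSet_Iio, rfl⟩]
    have hone : ∀ i : Fin n, P (u i ⁻¹' Iio s) = ENNReal.ofReal s := by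
      intro i
      rw [← Measure.map_apply (hmeas i) measurableSet_Iio, hunif i,
        Measure.restrict_apply measurableSet_Iio]
      have : Iio s ∩ Ioo (0:ℝ) 1 = Ioo 0 s := by
        ext x
        simp only [mem_inter_iff, mem_Iio, mem_Ioo]
        constructor
        · rintro ⟨h1, h2, h3⟩; exact ⟨h2, h1⟩
        · rintro ⟨h1, h2⟩; exact ⟨h2, h1, lt_of_lt_of_le h2 hs1⟩
      rw [this, Real.volume_Ioo, sub_zero]
    simp [hone, Finset.prod_const, Finset.card_univ]
  refine Measure.ext_of_Iic _ _ fun t => ?_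
  rw [Measure.map_apply hfmeas measurableSet_Iic, withDensity_apply _ measurableSet_Iic]
  rcases le_or_gt t c with hty | hty
  · -- t ≤ c : both sides vanish
    have hL : P ((fun ω => c / W ω) ⁻¹' Iic t) = 0 := by
      refine measure_eq_zero_iff_ae_notMem.mpr ?_
      filter_upwards [hae] with ω hω
      obtain ⟨hW0, hW1⟩ := hWle ω hω
      simp only [mem_preimage, mem_Iic, not_le]
      calc t ≤ c := hty
        _ < c / W ω := by rw [lt_div_iff₀ hW0]; nlinarith
    rw [hL]
    symm
    rw [setLIntegral_congr_fun_ae measurableSet_Iic (ae_of_all _ fun θ hθ => by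
      simp only [mem_Iic] at hθ
      simp [hd_def, show ¬ c < θ by linarith] :
        ∀ᵐ θ ∂volume, θ ∈ Iic t → d θ = (fun _ => (0:ℝ≥0∞)) θ), lintegral_zero]
  · -- c < t
    have ht0 : 0 < t := hc.trans hty
    set s : ℝ := c / t with hs_def
    have hs0 : 0 < s := div_pos hc ht0
    have hs1 : s < 1 := (div_lt_one ht0).mpr hty
    -- LHS
    have hLset : (fun ω => c / W ω) ⁻¹' Iic t =ᵐ[P] ((⋂ i, u i ⁻¹' Iio s)ᶜ : Set Ω) := by
      rw [Filter.eventuallyEq_set]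
      filter_upwards [hae] with ω hω
      obtain ⟨hW0, hW1⟩ := hWle ω hω
      rw [mem_preimage, mem_Iic, mem_compl_iff, mem_iInter]
      push_neg
      simp only [mem_preimage, mem_Iio, not_lt]
      constructor
      · intro h
        obtain ⟨j, hj⟩ := hWsup ω
        refine ⟨j, ?_⟩
        rw [← hj]
        rw [div_le_iff₀ hW0] at h
        rw [hs_def, div_le_iff₀ ht0]
        linarith
      · rintro ⟨i, hi⟩
        have hsW : s ≤ W ω := le_trans hi (le_ciSup (hbdd ω) i)
        rw [div_le_iff₀ hW0]
        rw [hs_def, div_le_iff₀ ht0] at hsW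
        linarith
    rw [measure_congr hLset,
      measure_compl (MeasurableSet.iInter fun i => (hmeas i) measurableSet_Iio)
        (measure_ne_top _ _), hprod s hs0 hs1.le, measure_univ]
    -- RHS
    have hsplit : Iic t = Iic c ∪ Ioc c t := (Set.Iic_union_Ioc_eq_Iic hty.le).symm
    rw [hsplit, lintegral_union measurableSet_Ioc (Set.Iic_disjoint_Ioc le_rfl)]
    have h0 : ∫⁻ θ in Iic c, d θ = 0 := by
      rw [setLIntegral_congr_fun_ae measurableSet_Iic (ae_of_all _ fun θ hθ => by
        simp only [mem_Iic] at hθ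
        simp [hd_def, show ¬ c < θ by linarith] :
          ∀ᵐ θ ∂volume, θ ∈ Iic c → d θ = (fun _ => (0:ℝ≥0∞)) θ), lintegral_zero]
    have hcont : ContinuousOn (fun θ : ℝ => (n:ℝ) * c ^ n / θ ^ (n + 1)) (Icc c t) :=
      continuousOn_const.div (continuousOn_pow (n + 1))
        fun θ hθ => pow_ne_zero _ (ne_of_gt (lt_of_lt_of_le hc hθ.1))
    have hint : IntegrableOn (fun θ : ℝ => (n:ℝ) * c ^ n / θ ^ (n + 1)) (Ioc c t) :=
      (hcont.integrableOn_Icc).mono_set Ioc_subset_Icc_self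
    have hnn : 0 ≤ᵐ[volume.restrict (Ioc c t)]
        fun θ : ℝ => (n:ℝ) * c ^ n / θ ^ (n + 1) := by
      rw [Filter.EventuallyLE, ae_restrict_iff' measurableSet_Ioc]
      refine ae_of_all _ fun θ hθ => ?_
      have hθ0 : 0 < θ := hc.trans hθ.1
      positivity
    have h2 : ∫⁻ θ in Ioc c t, d θ = ENNReal.ofReal (1 - s ^ n) := by
      rw [setLIntegral_congr_fun_ae measurableSet_Ioc (ae_of_all _ fun θ hθ => by
        simp [hd_def, hθ.1] :
          ∀ᵐ θ ∂volume, θ ∈ Ioc c t →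
            d θ = (fun θ => ENNReal.ofReal ((n:ℝ) * c ^ n / θ ^ (n + 1))) θ),
        ← ofReal_integral_eq_lintegral_ofReal hint hnn]
      congr 1
      rw [← intervalIntegral.integral_of_le hty.le]
      have heq : EqOn (fun θ : ℝ => (n:ℝ) * c ^ n / θ ^ (n + 1))
          (fun θ : ℝ => ((n:ℝ) * c ^ n) * θ ^ (-(n + 1 : ℤ))) (uIcc c t) := by
        intro θ hθ
        rw [uIcc_of_le hty.le] at hθ
        simp only []
        rw [zpow_neg, div_eq_mul_inv]
        norm_cast
      rw [intervalIntegral.integral_congr heq, intervalIntegral.integral_const_mul,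
        integral_zpow (Or.inr ⟨by omega, by
          rw [uIcc_of_le hty.le]; rintro ⟨h1, _⟩; linarith⟩)]
      have h1 : (-(n + 1 : ℤ) + 1) = -(n : ℤ) := by ring
      rw [h1]
      have hc0 : c ≠ 0 := ne_of_gt hc
      have ht0' : t ≠ 0 := ne_of_gt ht0
      rw [zpow_neg, zpow_neg, zpow_natCast, zpow_natCast, hs_def, div_pow]
      push_cast
      field_simp [hnR.ne']
      ring
    rw [h0, h2, zero_add, ← ENNReal.ofReal_pow hs0.le, ← ENNReal.ofReal_one,
      ← ENNReal.ofReal_sub _ (pow_nonneg hs0.le n)]
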